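/- Let z = (z_1, …, z_N) be an infinitesimally rigid crystal and let M = {(θ z_i + η)_{i=1}^N : θ ∈ SO(d), η ∈ ℝ^d} ⊂ (ℝ^d)^N. Then there exists δ > 0 such that H(x) > H(z) for every x ∈ (ℝ^d)^N with 0 < dist(x, M) ≤ δ, where dist(x, M) = inf_{y ∈ M} (Σ_{i=1}^N |x_i − y_i|²)^{1/2}; that is, z is rigid. -/

import Mathlib

open Matrix

/-- The action of a `d × d` real matrix on `ℝ^d` (Euclidean space). -/
noncomputable def matAct {d : ℕ} (X : Matrix (Fin d) (Fin d) ℝ)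
    (v : EuclideanSpace ℝ (Fin d)) : EuclideanSpace ℝ (Fin d) :=
  Matrix.toEuclideanLin X v

/-- `z` is a crystal: distinct particles are either at distance exactly `a`
(neighboring pairs) or at distance `> b`. -/
def IsCrystal {d N : ℕ} (a b : ℝ) (z : Fin N → EuclideanSpace ℝ (Fin d)) : Prop :=
  ∀ i j : Fin N, i ≠ j → ‖z i - z j‖ = a ∨ b < ‖z i - z j‖

/-- The quadratic form ℰ₁(h) = (č/a²) Σ_{⟨i,j⟩} ⟨h_i − h_j, z_i − z_j⟩², the sum being
over neighboring pairs. -/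
noncomputable def E1form {d N : ℕ} (a c : ℝ) (z h : Fin N → EuclideanSpace ℝ (Fin d)) : ℝ :=
  (c / a ^ 2) * ∑ i : Fin N, ∑ j : Fin N,
    if i < j ∧ ‖z i - z j‖ = a then (inner ℝ (h i - h j) (z i - z j) : ℝ) ^ 2 else 0

/-- ℰ₂(h) = (č²/a⁴) Σ_i |Σ_{j : ⟨i,j⟩} ⟨h_i − h_j, z_i − z_j⟩ (z_i − z_j)|². -/
noncomputable def E2form {d N : ℕ} (a c : ℝ) (z h : Fin N → EuclideanSpace ℝ (Fin d)) : ℝ :=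
  (c ^ 2 / a ^ 4) * ∑ i : Fin N,
    ‖∑ j : Fin N, if i ≠ j ∧ ‖z i - z j‖ = a then
        (inner ℝ (h i - h j) (z i - z j) : ℝ) • (z i - z j) else 0‖ ^ 2

/-- ‖∇h‖₂² = Σ_{⟨i,j⟩} |h_i − h_j|² (sum over neighboring pairs). -/
noncomputable def gradSq {d N : ℕ} (a : ℝ) (z h : Fin N → EuclideanSpace ℝ (Fin d)) : ℝ :=
  ∑ i : Fin N, ∑ j : Fin N, if i < j ∧ ‖z i - z j‖ = a then ‖h i - h j‖ ^ 2 else 0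

/-- Membership in H_z = {(X z_i + v)_i : X ∈ so(d), v ∈ ℝ^d}. -/
def InHz {d N : ℕ} (z h : Fin N → EuclideanSpace ℝ (Fin d)) : Prop :=
  ∃ X : Matrix (Fin d) (Fin d) ℝ, Xᵀ = -X ∧
    ∃ v : EuclideanSpace ℝ (Fin d), ∀ i, h i = matAct X (z i) + v

/-- Membership in H_z^⊥, the orthogonal complement of H_z for the inner product
⟨h, h'⟩ = Σ_i ⟨h_i, h'_i⟩. -/
def InHzPerp {d N : ℕ} (z h : Fin N → EuclideanSpace ℝ (Fin d)) : Prop :=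
  ∀ g : Fin N → EuclideanSpace ℝ (Fin d), InHz z g →
    ∑ i : Fin N, (inner ℝ (h i) (g i) : ℝ) = 0

/-- The crystal `z` is infinitesimally rigid: ℰ₁(h) = 0 holds exactly for h ∈ H_z. -/
def InfRigid {d N : ℕ} (a b c : ℝ) (z : Fin N → EuclideanSpace ℝ (Fin d)) : Prop :=
  IsCrystal a b z ∧ ∀ h : Fin N → EuclideanSpace ℝ (Fin d), E1form a c z h = 0 ↔ InHz z h

/-- The Hamiltonian H(x) = Σ_{1≤i<j≤N} U(|x_i − x_j|). -/
noncomputable def Ham {d N : ℕ} (U : ℝ → ℝ) (x : Fin N → EuclideanSpace ℝ (Fin d)) : ℝ :=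
  ∑ i : Fin N, ∑ j : Fin N, if i < j then U ‖x i - x j‖ else 0

/-- Membership in the special orthogonal group SO(d). -/
def IsSO {d : ℕ} (θ : Matrix (Fin d) (Fin d) ℝ) : Prop :=
  θ * θᵀ = 1 ∧ θ.det = 1

/-- The manifold M = {(θ z_i + η)_i : θ ∈ SO(d), η ∈ ℝ^d} of configurations isometric
to z (orientation preservingly). -/
def orbitM {d N : ℕ} (z : Fin N → EuclideanSpace ℝ (Fin d)) :
    Set (Fin N → EuclideanSpace ℝ (Fin d)) :=
  {y | ∃ (θ : Matrix (Fin d) (Fin d) ℝ) (η : EuclideanSpace ℝ (Fin d)),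
    IsSO θ ∧ ∀ i, y i = matAct θ (z i) + η}

/-- dist(x, M) = inf_{y ∈ M} (Σ_i |x_i − y_i|²)^{1/2}. -/
noncomputable def distToOrbit {d N : ℕ} (z x : Fin N → EuclideanSpace ℝ (Fin d)) : ℝ :=
  sInf {r : ℝ | ∃ y ∈ orbitM z, r = Real.sqrt (∑ i : Fin N, ‖x i - y i‖ ^ 2)}


/-! ### Auxiliary lemmas -/

open NormedSpace

section Aux

variable {d N : ℕ}

lemma matAct_one (v : EuclideanSpace ℝ (Fin d)) : matAct 1 v = v := by
  simp [matAct, Matrix.toEuclideanLin_apply]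

lemma matAct_mul (A B : Matrix (Fin d) (Fin d) ℝ) (v : EuclideanSpace ℝ (Fin d)) :
    matAct (A * B) v = matAct A (matAct B v) := by
  simp [matAct, Matrix.toEuclideanLin_apply, Matrix.mulVec_mulVec]

lemma matAct_sub (A : Matrix (Fin d) (Fin d) ℝ) (u w : EuclideanSpace ℝ (Fin d)) :
    matAct A (u - w) = matAct A u - matAct A w := by
  simp [matAct, map_sub]

lemma matAct_add (A : Matrix (Fin d) (Fin d) ℝ) (u w : EuclideanSpace ℝ (Fin d)) :
    matAct A (u + w) = matAct A u + matAct A w := by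
  simp [matAct, map_add]

lemma inner_matAct_left (A : Matrix (Fin d) (Fin d) ℝ) (u w : EuclideanSpace ℝ (Fin d)) :
    (inner ℝ (matAct A u) w : ℝ) = inner ℝ u (matAct Aᵀ w) := by
  have h := Matrix.toEuclideanLin_conjTranspose_eq_adjoint (𝕜 := ℝ) A
  have h2 : Aᴴ = Aᵀ := by ext i j; simp [Matrix.conjTranspose]
  rw [h2] at h
  simp only [matAct, h]
  rw [LinearMap.adjoint_inner_right]

lemma orth_comm {θ : Matrix (Fin d) (Fin d) ℝ} (hθ : θ * θᵀ = 1) : θᵀ * θ = 1 :=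
  mul_eq_one_comm.mp hθ

lemma matAct_transpose_matAct {θ : Matrix (Fin d) (Fin d) ℝ} (hθ : θ * θᵀ = 1)
    (u : EuclideanSpace ℝ (Fin d)) : matAct θᵀ (matAct θ u) = u := by
  rw [← matAct_mul, orth_comm hθ, matAct_one]

lemma matAct_matAct_transpose {θ : Matrix (Fin d) (Fin d) ℝ} (hθ : θ * θᵀ = 1)
    (u : EuclideanSpace ℝ (Fin d)) : matAct θ (matAct θᵀ u) = u := by
  rw [← matAct_mul, hθ, matAct_one]

lemma norm_matAct {θ : Matrix (Fin d) (Fin d) ℝ} (hθ : θ * θᵀ = 1)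
    (u : EuclideanSpace ℝ (Fin d)) : ‖matAct θ u‖ = ‖u‖ := by
  have h : (inner ℝ (matAct θ u) (matAct θ u) : ℝ) = inner ℝ u u := by
    rw [inner_matAct_left, matAct_transpose_matAct hθ]
  have h2 : ‖matAct θ u‖ ^ 2 = ‖u‖ ^ 2 := by
    rw [← real_inner_self_eq_norm_sq, ← real_inner_self_eq_norm_sq, h]
  nlinarith [norm_nonneg (matAct θ u), norm_nonneg u]

lemma isSO_one : IsSO (1 : Matrix (Fin d) (Fin d) ℝ) := by
  constructor <;> simp

lemma isSO_mul {θ ψ : Matrix (Fin d) (Fin d) ℝ} (hθ : IsSO θ) (hψ : IsSO ψ) :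
    IsSO (θ * ψ) := by
  constructor
  · rw [Matrix.transpose_mul]
    rw [mul_assoc, ← mul_assoc ψ ψᵀ θᵀ, hψ.1, one_mul, hθ.1]
  · rw [Matrix.det_mul, hθ.2, hψ.2, mul_one]

lemma exp_orth {X : Matrix (Fin d) (Fin d) ℝ} (hX : Xᵀ = -X) (t : ℝ) :
    exp (t • X) * (exp (t • X))ᵀ = 1 := by
  rw [← Matrix.exp_transpose, Matrix.transpose_smul, hX, smul_neg]
  rw [← Matrix.exp_add_of_commute (t • X) (-(t • X)) (Commute.neg_right rfl)]
  simp

lemma continuous_exp_smul (X : Matrix (Fin d) (Fin d) ℝ) :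
    Continuous fun t : ℝ => exp (t • X) := by
  letI : SeminormedRing (Matrix (Fin d) (Fin d) ℝ) := Matrix.linftyOpSemiNormedRing
  letI : NormedRing (Matrix (Fin d) (Fin d) ℝ) := Matrix.linftyOpNormedRing
  letI : NormedAlgebra ℝ (Matrix (Fin d) (Fin d) ℝ) := Matrix.linftyOpNormedAlgebra
  letI : NormedAlgebra ℚ (Matrix (Fin d) (Fin d) ℝ) := Matrix.linftyOpNormedAlgebra
  exact exp_continuous.comp (continuous_id.smul continuous_const)

lemma exp_det_one {X : Matrix (Fin d) (Fin d) ℝ} (hX : Xᵀ = -X) (t : ℝ) :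
    (exp (t • X)).det = 1 := by
  set f : ℝ → ℝ := fun t => (exp (t • X)).det with hf
  have hcont : Continuous f := (continuous_exp_smul X).matrix_det
  have hsq : ∀ s, f s = 1 ∨ f s = -1 := by
    intro s
    have h1 : f s * f s = 1 := by
      have h := congrArg Matrix.det (exp_orth hX s)
      rwa [Matrix.det_mul, Matrix.det_transpose, Matrix.det_one] at h
    rcases mul_self_eq_one_iff.mp h1 with h | h
    · exact Or.inl h
    · exact Or.inr h
  have h0 : f 0 = 1 := by simp [hf]
  by_contra hne
  have ht : f t = -1 := (hsq t).resolve_left hne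
  have hmem : (0:ℝ) ∈ Set.uIcc (f 0) (f t) := by
    rw [h0, ht]
    rw [Set.uIcc_comm]; exact Set.mem_uIcc.mpr (Or.inl (by norm_num))
  obtain ⟨s, _, hs⟩ := intermediate_value_uIcc (a := (0:ℝ)) (b := t) hcont.continuousOn hmem
  rcases hsq s with h | h <;> rw [hs] at h <;> norm_num at h

lemma isSO_exp {X : Matrix (Fin d) (Fin d) ℝ} (hX : Xᵀ = -X) (t : ℝ) :
    IsSO (exp (t • X)) :=
  ⟨exp_orth hX t, exp_det_one hX t⟩

lemma hasDerivAt_matAct_exp (X : Matrix (Fin d) (Fin d) ℝ) (u : EuclideanSpace ℝ (Fin d)) :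
    HasDerivAt (fun t : ℝ => matAct (exp (t • X)) u) (matAct X u) 0 := by
  letI : SeminormedRing (Matrix (Fin d) (Fin d) ℝ) := Matrix.linftyOpSemiNormedRing
  letI : NormedRing (Matrix (Fin d) (Fin d) ℝ) := Matrix.linftyOpNormedRing
  letI : NormedAlgebra ℝ (Matrix (Fin d) (Fin d) ℝ) := Matrix.linftyOpNormedAlgebra
  letI : NormedAlgebra ℚ (Matrix (Fin d) (Fin d) ℝ) := Matrix.linftyOpNormedAlgebra
  have hexp : HasDerivAt (fun t : ℝ => exp (t • X)) X 0 := by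
    have := hasDerivAt_exp_smul_const (𝕂 := ℝ) X (0 : ℝ)
    simp only [zero_smul, exp_zero, one_mul] at this
    exact this
  set L : Matrix (Fin d) (Fin d) ℝ →ₗ[ℝ] EuclideanSpace ℝ (Fin d) :=
    (Matrix.toEuclideanLin (𝕜 := ℝ) (m := Fin d) (n := Fin d)).toLinearMap.flip u with hL
  have hLf : HasFDerivAt (LinearMap.toContinuousLinearMap L)
      (LinearMap.toContinuousLinearMap L) (exp ((0:ℝ) • X)) :=
    (LinearMap.toContinuousLinearMap L).hasFDerivAt
  have := hLf.comp_hasDerivAt 0 hexp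
  exact this

lemma perp_of_min (z x' : Fin N → EuclideanSpace ℝ (Fin d))
    (hmin : ∀ y ∈ orbitM z, (∑ i, ‖x' i - z i‖ ^ 2) ≤ ∑ i, ‖x' i - y i‖ ^ 2)
    {X : Matrix (Fin d) (Fin d) ℝ} (hX : Xᵀ = -X) (v : EuclideanSpace ℝ (Fin d)) :
    ∑ i, (inner ℝ (x' i - z i) (matAct X (z i) + v) : ℝ) = 0 := by
  set w : ℝ → Fin N → EuclideanSpace ℝ (Fin d) :=
    fun t i => x' i - (matAct (exp (t • X)) (z i) + t • v) with hw
  set φ : ℝ → ℝ := fun t => ∑ i, (inner ℝ (w t i) (w t i) : ℝ) with hφ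
  have hw0 : ∀ i, w 0 i = x' i - z i := by
    intro i; simp [hw, exp_zero, matAct_one]
  have hwD : ∀ i, HasDerivAt (fun t => w t i) (-(matAct X (z i) + v)) 0 := by
    intro i
    have h1 : HasDerivAt (fun t : ℝ => matAct (exp (t • X)) (z i) + t • v)
        (matAct X (z i) + v) 0 := by
      have h2 : HasDerivAt (fun t : ℝ => t • v) v 0 := by
        simpa using (hasDerivAt_id (0:ℝ)).smul_const v
      exact (hasDerivAt_matAct_exp X (z i)).add h2
    exact ((hasDerivAt_const (0:ℝ) (x' i)).sub h1).congr_deriv (zero_sub _)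
  have hφD : HasDerivAt φ
      (∑ i, ((inner ℝ (w 0 i) (-(matAct X (z i) + v)) : ℝ)
        + (inner ℝ (-(matAct X (z i) + v)) (w 0 i) : ℝ))) 0 := by
    apply HasDerivAt.fun_sum
    intro i _
    exact (hwD i).inner ℝ (hwD i)
  have hmin' : IsLocalMin φ 0 := by
    apply Filter.Eventually.of_forall
    intro t
    have hyt : (fun i => matAct (exp (t • X)) (z i) + t • v) ∈ orbitM z :=
      ⟨exp (t • X), t • v, isSO_exp hX t, fun i => rfl⟩
    have hmt := hmin _ hyt
    have e1 : ∀ (s : ℝ), φ s = ∑ i, ‖w s i‖ ^ 2 := by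
      intro s; simp only [hφ]
      exact Finset.sum_congr rfl fun i _ => real_inner_self_eq_norm_sq _
    rw [e1, e1]
    simp only [hw0]
    exact hmt
  have hzero := hmin'.hasDerivAt_eq_zero hφD
  have hkey : (-2 : ℝ) * ∑ i, (inner ℝ (x' i - z i) (matAct X (z i) + v) : ℝ) = 0 := by
    rw [Finset.mul_sum]
    rw [← hzero]
    apply Finset.sum_congr rfl
    intro i _
    rw [hw0 i, inner_neg_right, inner_neg_left, real_inner_comm (x' i - z i)]
    ring
  have h2 : (-2 : ℝ) ≠ 0 := by norm_num
  exact (mul_eq_zero.mp hkey).resolve_left h2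

lemma isCompact_SO : IsCompact {θ : Matrix (Fin d) (Fin d) ℝ | IsSO θ} := by
  letI : NormedAddCommGroup (Matrix (Fin d) (Fin d) ℝ) := Matrix.linftyOpNormedAddCommGroup
  letI : NormedSpace ℝ (Matrix (Fin d) (Fin d) ℝ) := Matrix.linftyOpNormedSpace
  haveI : ProperSpace (Matrix (Fin d) (Fin d) ℝ) :=
    FiniteDimensional.proper ℝ (Matrix (Fin d) (Fin d) ℝ)
  apply Metric.isCompact_of_isClosed_isBounded
  · have h1 : IsClosed {θ : Matrix (Fin d) (Fin d) ℝ | θ * θᵀ = 1} := by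
      apply isClosed_eq _ continuous_const
      exact continuous_id.matrix_mul continuous_id.matrix_transpose
    have h2 : IsClosed {θ : Matrix (Fin d) (Fin d) ℝ | θ.det = 1} :=
      isClosed_eq continuous_id.matrix_det continuous_const
    exact h1.inter h2
  · apply Bornology.IsBounded.subset (Metric.isBounded_closedBall
      (x := (0:Matrix (Fin d) (Fin d) ℝ)) (r := d))
    intro θ hθ
    simp only [Metric.mem_closedBall, dist_zero_right]
    have hentry : ∀ i j, |θ i j| ≤ 1 := by
      intro i j
      have h1 : ∑ k, θ i k * θ i k = 1 := by
        have := congrFun (congrFun hθ.1 i) i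
        simpa [Matrix.mul_apply, Matrix.one_apply, Matrix.transpose_apply] using this
      have h2 : θ i j * θ i j ≤ 1 := by
        rw [← h1]
        have hnn : ∀ k ∈ Finset.univ, 0 ≤ θ i k * θ i k := fun k _ => mul_self_nonneg _
        exact Finset.single_le_sum hnn (Finset.mem_univ j)
      rw [abs_le]
      constructor <;> nlinarith
    rw [Matrix.linfty_opNorm_def]
    have hsup : (Finset.univ.sup fun i : Fin d => ∑ j, ‖θ i j‖₊) ≤ (d : NNReal) := by
      apply Finset.sup_le
      intro i _
      calc ∑ j, ‖θ i j‖₊ ≤ ∑ _j : Fin d, 1 := by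
            apply Finset.sum_le_sum
            intro j _
            have := hentry i j
            rw [← NNReal.coe_le_coe]
            simpa [Real.nnnorm_abs] using this
        _ = (d : NNReal) := by simp
    exact_mod_cast hsup

lemma centroid_min (c : Fin N → EuclideanSpace ℝ (Fin d)) (η : EuclideanSpace ℝ (Fin d))
    (hN : 0 < N) :
    ∑ i, ‖c i - (N : ℝ)⁻¹ • ∑ j, c j‖ ^ 2 ≤ ∑ i, ‖c i - η‖ ^ 2 := by
  set m : EuclideanSpace ℝ (Fin d) := (N : ℝ)⁻¹ • ∑ j, c j with hm
  have hsum : ∑ i, (c i - m) = 0 := by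
    rw [Finset.sum_sub_distrib]
    rw [Finset.sum_const, hm, Finset.card_univ, Fintype.card_fin]
    rw [← Nat.cast_smul_eq_nsmul ℝ, smul_smul]
    rw [mul_inv_cancel₀ (by positivity : (N:ℝ) ≠ 0)]
    simp
  have key : ∀ i, ‖c i - η‖ ^ 2
      = ‖c i - m‖ ^ 2 + 2 * (inner ℝ (c i - m) (m - η) : ℝ) + ‖m - η‖ ^ 2 := by
    intro i
    have hd : c i - η = (c i - m) + (m - η) := by abel
    rw [hd, norm_add_sq_real]
  calc ∑ i, ‖c i - m‖ ^ 2
      ≤ ∑ i, ‖c i - m‖ ^ 2 + (N : ℝ) * ‖m - η‖ ^ 2 :=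
        le_add_of_nonneg_right (by positivity)
    _ = ∑ i, ‖c i - η‖ ^ 2 := by
        simp only [key]
        rw [Finset.sum_add_distrib, Finset.sum_add_distrib]
        have h1 : ∑ i : Fin N, 2 * (inner ℝ (c i - m) (m - η) : ℝ) = 0 := by
          rw [← Finset.mul_sum, ← sum_inner, hsum, inner_zero_left, mul_zero]
        rw [h1, Finset.sum_const, Finset.card_univ, Fintype.card_fin]
        push_cast
        ring

lemma continuous_matAct_apply (u : EuclideanSpace ℝ (Fin d)) :
    Continuous fun θ : Matrix (Fin d) (Fin d) ℝ => matAct θ u := by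
  letI : NormedAddCommGroup (Matrix (Fin d) (Fin d) ℝ) := Matrix.linftyOpNormedAddCommGroup
  letI : NormedSpace ℝ (Matrix (Fin d) (Fin d) ℝ) := Matrix.linftyOpNormedSpace
  exact LinearMap.continuous_of_finiteDimensional
    ((Matrix.toEuclideanLin (𝕜 := ℝ) (m := Fin d) (n := Fin d)).toLinearMap.flip u)

lemma exists_min (z x : Fin N → EuclideanSpace ℝ (Fin d)) :
    ∃ y₀ ∈ orbitM z, ∀ y ∈ orbitM z,
      (∑ i, ‖x i - y₀ i‖ ^ 2) ≤ ∑ i, ‖x i - y i‖ ^ 2 := by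
  rcases Nat.eq_zero_or_pos N with hN | hN
  · refine ⟨fun i => matAct 1 (z i) + 0, ⟨1, 0, isSO_one, fun i => rfl⟩, ?_⟩
    intro y _
    subst hN
    simp
  · set η' : Matrix (Fin d) (Fin d) ℝ → EuclideanSpace ℝ (Fin d) :=
      fun θ => (N : ℝ)⁻¹ • ∑ j, (x j - matAct θ (z j)) with hη'
    set G : Matrix (Fin d) (Fin d) ℝ → ℝ :=
      fun θ => ∑ i, ‖x i - matAct θ (z i) - η' θ‖ ^ 2 with hG
    have hGcont : Continuous G := by
      apply continuous_finset_sum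
      intro i _
      apply Continuous.pow
      apply Continuous.norm
      apply Continuous.sub
      · exact continuous_const.sub (continuous_matAct_apply (z i))
      · exact Continuous.const_smul (continuous_finset_sum _
          (fun j _ => continuous_const.sub (continuous_matAct_apply (z j)))) ((N:ℝ)⁻¹)
    obtain ⟨θ₀, hθ₀K, hθ₀min⟩ := isCompact_SO.exists_isMinOn ⟨1, isSO_one⟩ hGcont.continuousOn
    refine ⟨fun i => matAct θ₀ (z i) + η' θ₀, ⟨θ₀, η' θ₀, hθ₀K, fun i => rfl⟩, ?_⟩
    rintro y ⟨θ, η, hθ, hy⟩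
    have step1 : G θ₀ ≤ G θ := hθ₀min hθ
    have step2 : G θ ≤ ∑ i, ‖x i - y i‖ ^ 2 := by
      have hcm := centroid_min (fun j => x j - matAct θ (z j)) η hN
      simp only [hG]
      calc ∑ i, ‖x i - matAct θ (z i) - η' θ‖ ^ 2
          ≤ ∑ i, ‖(x i - matAct θ (z i)) - η‖ ^ 2 := by
            simpa [hη', sub_sub] using hcm
        _ = ∑ i, ‖x i - y i‖ ^ 2 := by
            apply Finset.sum_congr rfl
            intro i _
            rw [hy i]
            congr 1
            congr 1
            abel
    calc ∑ i, ‖x i - (matAct θ₀ (z i) + η' θ₀)‖ ^ 2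
        = G θ₀ := by
          apply Finset.sum_congr rfl
          intro i _
          congr 1
          congr 1
          abel
      _ ≤ ∑ i, ‖x i - y i‖ ^ 2 := le_trans step1 step2

/-- The sum of squares appearing in `E1form` (without the prefactor). -/
noncomputable def Qz (a : ℝ) (z h : Fin N → EuclideanSpace ℝ (Fin d)) : ℝ :=
  ∑ i : Fin N, ∑ j : Fin N,
    if i < j ∧ ‖z i - z j‖ = a then (inner ℝ (h i - h j) (z i - z j) : ℝ) ^ 2 else 0

lemma Qz_nonneg (a : ℝ) (z h : Fin N → EuclideanSpace ℝ (Fin d)) : 0 ≤ Qz a z h := by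
  apply Finset.sum_nonneg; intro i _
  apply Finset.sum_nonneg; intro j _
  split
  · positivity
  · exact le_refl 0

lemma Qz_smul (a : ℝ) (z h : Fin N → EuclideanSpace ℝ (Fin d)) (t : ℝ) :
    Qz a z (t • h) = t ^ 2 * Qz a z h := by
  simp only [Qz, Finset.mul_sum]
  apply Finset.sum_congr rfl; intro i _
  apply Finset.sum_congr rfl; intro j _
  split
  · simp only [Pi.smul_apply, ← smul_sub, real_inner_smul_left]
    ring
  · ring

lemma continuous_Qz (a : ℝ) (z : Fin N → EuclideanSpace ℝ (Fin d)) :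
    Continuous fun h : Fin N → EuclideanSpace ℝ (Fin d) => Qz a z h := by
  apply continuous_finset_sum; intro i _
  apply continuous_finset_sum; intro j _
  split
  · exact (Continuous.inner ((continuous_apply i).sub (continuous_apply j))
      continuous_const).pow 2
  · exact continuous_const

lemma continuous_sq (d N : ℕ) :
    Continuous fun h : Fin N → EuclideanSpace ℝ (Fin d) => ∑ i, ‖h i‖ ^ 2 := by
  apply continuous_finset_sum; intro i _
  exact ((continuous_apply i).norm).pow 2

lemma inHzPerp_smul {z h : Fin N → EuclideanSpace ℝ (Fin d)} (hp : InHzPerp z h) (t : ℝ) :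
    InHzPerp z (t • h) := by
  intro g hg
  have h0 := hp g hg
  simp only [Pi.smul_apply, real_inner_smul_left, ← Finset.mul_sum, h0, mul_zero]

lemma isClosed_perp (z : Fin N → EuclideanSpace ℝ (Fin d)) :
    IsClosed {h : Fin N → EuclideanSpace ℝ (Fin d) | InHzPerp z h} := by
  have hrw : {h : Fin N → EuclideanSpace ℝ (Fin d) | InHzPerp z h} =
      ⋂ (g : Fin N → EuclideanSpace ℝ (Fin d)) (_ : InHz z g),
        {h | ∑ i : Fin N, (inner ℝ (h i) (g i) : ℝ) = 0} := by
    ext h; simp only [Set.mem_setOf_eq, Set.mem_iInter]; rfl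
  rw [hrw]
  apply isClosed_iInter; intro g
  apply isClosed_iInter; intro _
  apply isClosed_eq _ continuous_const
  apply continuous_finset_sum; intro i _
  exact Continuous.inner (continuous_apply i) continuous_const

lemma exists_lambda (a c : ℝ) (ha : 0 < a) (hc : 0 < c)
    (z : Fin N → EuclideanSpace ℝ (Fin d))
    (hr : ∀ h : Fin N → EuclideanSpace ℝ (Fin d), E1form a c z h = 0 ↔ InHz z h) :
    ∃ lam : ℝ, 0 < lam ∧ ∀ h : Fin N → EuclideanSpace ℝ (Fin d), InHzPerp z h →
      lam * (∑ i, ‖h i‖ ^ 2) ≤ Qz a z h := by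
  classical
  set S : Set (Fin N → EuclideanSpace ℝ (Fin d)) :=
    {h | InHzPerp z h ∧ ∑ i, ‖h i‖ ^ 2 = 1} with hS
  have hnormalize : ∀ h : Fin N → EuclideanSpace ℝ (Fin d), InHzPerp z h →
      0 < ∑ i, ‖h i‖ ^ 2 → ((Real.sqrt (∑ i, ‖h i‖ ^ 2))⁻¹ • h) ∈ S := by
    intro h hp hpos
    refine ⟨inHzPerp_smul hp _, ?_⟩
    have hsqrt : Real.sqrt (∑ i, ‖h i‖ ^ 2) > 0 := Real.sqrt_pos.mpr hpos
    have hterm : ∀ i, ‖((Real.sqrt (∑ i, ‖h i‖ ^ 2))⁻¹ • h) i‖ ^ 2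
        = (∑ i, ‖h i‖ ^ 2)⁻¹ * ‖h i‖ ^ 2 := by
      intro i
      simp only [Pi.smul_apply, norm_smul, norm_inv, Real.norm_eq_abs,
        abs_of_pos hsqrt]
      rw [mul_pow, ← Real.sqrt_inv, Real.sq_sqrt (by positivity)]
    rw [Finset.sum_congr rfl (fun i _ => hterm i), ← Finset.mul_sum,
      inv_mul_cancel₀ (ne_of_gt hpos)]
  by_cases hne : S.Nonempty
  · have hQc := continuous_Qz (N := N) a z
    have hsc := continuous_sq d N
    have hclosed : IsClosed S := (isClosed_perp z).inter (isClosed_eq hsc continuous_const)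
    have hbdd : Bornology.IsBounded S := by
      apply Bornology.IsBounded.subset (Metric.isBounded_closedBall
        (x := (0 : Fin N → EuclideanSpace ℝ (Fin d))) (r := 1))
      rintro h ⟨-, hs⟩
      simp only [Metric.mem_closedBall, dist_zero_right]
      apply pi_norm_le_iff_of_nonneg zero_le_one |>.mpr
      intro i
      have h1 : ‖h i‖ ^ 2 ≤ 1 := by
        rw [← hs]
        exact Finset.single_le_sum (f := fun j => ‖h j‖ ^ 2)
          (fun j _ => by positivity) (Finset.mem_univ i)
      nlinarith [norm_nonneg (h i)]
    have hcompact : IsCompact S := Metric.isCompact_of_isClosed_isBounded hclosed hbdd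
    obtain ⟨h₀, hh₀S, hh₀min⟩ := hcompact.exists_isMinOn hne hQc.continuousOn
    have hlam : 0 < Qz a z h₀ := by
      rcases lt_or_eq_of_le (Qz_nonneg a z h₀) with h | h
      · exact h
      · exfalso
        have hE1 : E1form a c z h₀ = 0 := by
          have he : E1form a c z h₀ = (c / a ^ 2) * Qz a z h₀ := rfl
          rw [he, ← h, mul_zero]
        have hmem : InHz z h₀ := (hr h₀).mp hE1
        have hself := hh₀S.1 h₀ hmem
        have hs := hh₀S.2
        rw [Finset.sum_congr rfl (fun i _ => real_inner_self_eq_norm_sq (h₀ i))] at hself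
        rw [hs] at hself
        norm_num at hself
    refine ⟨Qz a z h₀, hlam, ?_⟩
    intro h hp
    rcases eq_or_lt_of_le (Finset.sum_nonneg (fun i (_ : i ∈ Finset.univ) =>
      (by positivity : (0:ℝ) ≤ ‖h i‖ ^ 2))) with hs | hs
    · rw [← hs, mul_zero]; exact Qz_nonneg a z h
    · have hmem := hnormalize h hp hs
      have hle : Qz a z h₀ ≤ Qz a z ((Real.sqrt (∑ i, ‖h i‖ ^ 2))⁻¹ • h) := hh₀min hmem
      rw [Qz_smul, inv_pow, Real.sq_sqrt hs.le] at hle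
      have h2 := mul_le_mul_of_nonneg_right hle hs.le
      have h3 : ((∑ i, ‖h i‖ ^ 2)⁻¹ * Qz a z h) * (∑ i, ‖h i‖ ^ 2) = Qz a z h := by
        field_simp
      rw [h3] at h2
      exact h2
  · refine ⟨1, one_pos, ?_⟩
    intro h hp
    rcases eq_or_lt_of_le (Finset.sum_nonneg (fun i (_ : i ∈ Finset.univ) =>
      (by positivity : (0:ℝ) ≤ ‖h i‖ ^ 2))) with hs | hs
    · rw [← hs, mul_zero]; exact Qz_nonneg a z h
    · exact absurd ⟨_, hnormalize h hp hs⟩ hne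

end Aux

/- STATEMENT 7: Let z be an infinitesimally rigid crystal and
M = {(θ z_i + η)_i : θ ∈ SO(d), η ∈ ℝ^d}. Then there exists δ > 0 such that
H(x) > H(z) for every x with 0 < dist(x, M) ≤ δ; that is, z is rigid. -/

set_option maxHeartbeats 1200000 in
theorem stmt7 {d N : ℕ} (U : ℝ → ℝ) (a b c : ℝ)
    (hU : ContDiff ℝ 3 U) (hUsupp : HasCompactSupport U) (hUeven : ∀ r, U (-r) = U r)
    (ha : 0 < a) (hmin : ∀ r, 0 ≤ r → U a ≤ U r)
    (huniq : ∀ r, 0 < r → (∀ s, 0 ≤ s → U r ≤ U s) → r = a)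
    (hc : deriv (deriv U) a = c) (hcpos : 0 < c)
    (hb : b = sInf {r : ℝ | 0 < r ∧ ∀ s, r < s → U s = 0})
    (z : Fin N → EuclideanSpace ℝ (Fin d)) (hz : InfRigid a b c z) :
    ∃ δ : ℝ, 0 < δ ∧ ∀ x : Fin N → EuclideanSpace ℝ (Fin d),
      0 < distToOrbit z x → distToOrbit z x ≤ δ → Ham U z < Ham U x := by
  classical
  -- U vanishes beyond b
  obtain ⟨R, hR⟩ := hUsupp.isBounded.subset_closedBall (0:ℝ)
  have hmemT : (0:ℝ) < max R 1 ∧ ∀ s, max R 1 < s → U s = 0 := by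
    constructor
    · exact lt_of_lt_of_le one_pos (le_max_right R 1)
    · intro s hs
      by_contra hUs
      have h1 : s ∈ tsupport U := subset_tsupport U hUs
      have h2 := hR h1
      rw [Metric.mem_closedBall, Real.dist_eq, sub_zero] at h2
      have h3 : s ≤ R := le_trans (le_abs_self s) h2
      have h4 := le_max_left R 1
      linarith
  have hTne : Set.Nonempty {r : ℝ | 0 < r ∧ ∀ s, r < s → U s = 0} := ⟨max R 1, hmemT⟩
  have hUzero : ∀ s, b < s → U s = 0 := by
    intro s hs
    rw [hb] at hs
    obtain ⟨r, hrT, hrs⟩ := exists_lt_of_csInf_lt hTne hs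
    exact hrT.2 s hrs
  obtain ⟨hcrys, hrigid⟩ := hz
  obtain ⟨lam, hlam, hQbound⟩ := exists_lambda a c ha hcpos z hrigid
  -- margin for far pairs
  obtain ⟨ρ, hρpos, hρ⟩ : ∃ ρ : ℝ, 0 < ρ ∧
      ∀ i j : Fin N, b < ‖z i - z j‖ → 2 * ρ ≤ ‖z i - z j‖ - b := by
    set P := Finset.univ.filter (fun p : Fin N × Fin N => b < ‖z p.1 - z p.2‖) with hP
    by_cases hPne : P.Nonempty
    · refine ⟨P.inf' hPne (fun p => (‖z p.1 - z p.2‖ - b)/2), ?_, ?_⟩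
      · rw [Finset.lt_inf'_iff]
        intro p hp
        have := (Finset.mem_filter.mp hp).2
        linarith
      · intro i j hij
        have hmem : (i,j) ∈ P := Finset.mem_filter.mpr ⟨Finset.mem_univ _, hij⟩
        have := Finset.inf'_le (fun p => (‖z p.1 - z p.2‖ - b)/2) hmem
        simp only at this
        linarith
    · refine ⟨1, one_pos, ?_⟩
      intro i j hij
      exact absurd ⟨(i,j), Finset.mem_filter.mpr ⟨Finset.mem_univ _, hij⟩⟩ hPne
  have hq : 0 < lam / ((N:ℝ)^2+1) := by positivity
  set δ := min (min (a/4) (ρ/2)) (Real.sqrt (lam / ((N:ℝ)^2+1)) / 4) with hδdef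
  have hδpos : 0 < δ := by
    apply lt_min (lt_min (by linarith) (by linarith))
    have := Real.sqrt_pos.mpr hq
    linarith
  have hδa : δ ≤ a/4 := le_trans (min_le_left _ _) (min_le_left _ _)
  have hδρ : δ ≤ ρ/2 := le_trans (min_le_left _ _) (min_le_right _ _)
  have hδq : δ ≤ Real.sqrt (lam/((N:ℝ)^2+1)) / 4 := min_le_right _ _
  refine ⟨δ, hδpos, ?_⟩
  intro x hdpos hdle
  obtain ⟨y₀, hy₀M, hy₀min⟩ := exists_min z x
  have hdist : distToOrbit z x = Real.sqrt (∑ i, ‖x i - y₀ i‖ ^ 2) := by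
    apply IsLeast.csInf_eq
    constructor
    · exact ⟨y₀, hy₀M, rfl⟩
    · rintro r ⟨y, hyM, rfl⟩
      exact Real.sqrt_le_sqrt (hy₀min y hyM)
  set s₀ := ∑ i, ‖x i - y₀ i‖ ^ 2 with hs₀def
  have hs₀nonneg : 0 ≤ s₀ := Finset.sum_nonneg (fun i _ => by positivity)
  have hs₀pos : 0 < s₀ := by
    rcases eq_or_lt_of_le hs₀nonneg with h | h
    · exfalso
      rw [hdist] at hdpos
      rw [← h, Real.sqrt_zero] at hdpos
      exact lt_irrefl 0 hdpos
    · exact h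
  have hs₀le : s₀ ≤ δ ^ 2 := by
    rw [hdist] at hdle
    have h1 : Real.sqrt s₀ ≤ δ := hdle
    calc s₀ = Real.sqrt s₀ ^ 2 := (Real.sq_sqrt hs₀nonneg).symm
      _ ≤ δ ^ 2 := pow_le_pow_left₀ (Real.sqrt_nonneg _) h1 2
  have hpart : ∀ i, ‖x i - y₀ i‖ ≤ δ := by
    intro i
    have h1 : ‖x i - y₀ i‖ ^ 2 ≤ δ ^ 2 :=
      le_trans (Finset.single_le_sum (f := fun j => ‖x j - y₀ j‖ ^ 2)
        (fun j _ => by positivity) (Finset.mem_univ i)) hs₀le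
    nlinarith [norm_nonneg (x i - y₀ i), hδpos.le]
  obtain ⟨θ, η, hθ, hy⟩ := hy₀M
  have hθorth := hθ.1
  have hθTorth : θᵀ * (θᵀ)ᵀ = 1 := by
    rw [Matrix.transpose_transpose]; exact orth_comm hθorth
  have hzpair : ∀ i j, ‖y₀ i - y₀ j‖ = ‖z i - z j‖ := by
    intro i j
    rw [hy i, hy j]
    have e : matAct θ (z i) + η - (matAct θ (z j) + η) = matAct θ (z i - z j) := by
      rw [matAct_sub]; abel
    rw [e, norm_matAct hθorth]
  have hpair_lb : ∀ i j, ‖z i - z j‖ - 2*δ ≤ ‖x i - x j‖ := by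
    intro i j
    have h1 : ‖z i - z j‖ = ‖y₀ i - y₀ j‖ := (hzpair i j).symm
    have h2 : ‖y₀ i - y₀ j‖ ≤ ‖-(x i - y₀ i)‖ + ‖x i - x j‖ + ‖x j - y₀ j‖ := by
      have e : y₀ i - y₀ j = -(x i - y₀ i) + (x i - x j) + (x j - y₀ j) := by abel
      rw [e]
      exact norm_add₃_le
    rw [norm_neg] at h2
    have h3 := hpart i
    have h4 := hpart j
    linarith
  have hUpair : ∀ i j : Fin N, i < j → U ‖z i - z j‖ ≤ U ‖x i - x j‖ := by
    intro i j hij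
    rcases hcrys i j (Fin.ne_of_lt hij) with hnb | hfar
    · rw [hnb]; exact hmin _ (norm_nonneg _)
    · have h1 := hρ i j hfar
      have h2 := hpair_lb i j
      rw [hUzero _ hfar, hUzero _ (by linarith : b < ‖x i - x j‖)]
  by_contra hcon
  push_neg at hcon
  -- all pair contributions are equal
  set g : Fin N × Fin N → ℝ :=
    fun p => if p.1 < p.2 then U ‖x p.1 - x p.2‖ - U ‖z p.1 - z p.2‖ else 0 with hgdef
  have hgnonneg : ∀ p ∈ Finset.univ ×ˢ Finset.univ, 0 ≤ g p := by
    rintro ⟨i, j⟩ _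
    simp only [hgdef]
    split
    · next hij => have := hUpair i j hij; linarith
    · exact le_refl 0
  have hgsum : ∑ p ∈ Finset.univ ×ˢ Finset.univ, g p = Ham U x - Ham U z := by
    rw [Finset.sum_product]
    simp only [Ham, ← Finset.sum_sub_distrib]
    apply Finset.sum_congr rfl; intro i _
    apply Finset.sum_congr rfl; intro j _
    simp only [hgdef]
    split
    · rfl
    · simp
  have hgzero : ∀ p ∈ Finset.univ ×ˢ Finset.univ, g p = 0 := by
    have hge := Finset.sum_nonneg hgnonneg
    rw [← Finset.sum_eq_zero_iff_of_nonneg hgnonneg]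
    rw [hgsum] at hge ⊢
    linarith
  have hxdist : ∀ i j, i < j → ‖z i - z j‖ = a → ‖x i - x j‖ = a := by
    intro i j hij hnb
    have h0 := hgzero (i, j) (by simp)
    simp only [hgdef, if_pos hij] at h0
    have hUeq : U ‖x i - x j‖ = U a := by rw [← hnb]; linarith
    apply huniq
    · have := hpair_lb i j
      rw [hnb] at this
      linarith
    · intro s hs
      rw [hUeq]; exact hmin s hs
  -- rigid reduction to a perturbation of z
  set x' : Fin N → EuclideanSpace ℝ (Fin d) := fun i => matAct θᵀ (x i - η) with hx'def
  have hhi : ∀ i, x' i - z i = matAct θᵀ (x i - y₀ i) := by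
    intro i
    rw [hy i]
    have e1 : x i - (matAct θ (z i) + η) = (x i - η) - matAct θ (z i) := by abel
    rw [e1, matAct_sub, matAct_transpose_matAct hθorth]
  have hnormh : ∀ i, ‖x' i - z i‖ = ‖x i - y₀ i‖ := by
    intro i; rw [hhi i, norm_matAct hθTorth]
  have hs' : ∑ i, ‖x' i - z i‖ ^ 2 = s₀ := by
    apply Finset.sum_congr rfl
    intro i _
    rw [hnormh i]
  have hmin' : ∀ y ∈ orbitM z, (∑ i, ‖x' i - z i‖ ^ 2) ≤ ∑ i, ‖x' i - y i‖ ^ 2 := by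
    rintro y ⟨ψ, μ, hψ, hyy⟩
    have hfix : ∀ i, matAct θ (x' i) = x i - η := by
      intro i
      exact matAct_matAct_transpose hθorth (x i - η)
    have hxai : ∀ i, ‖x' i - y i‖ = ‖x i - (matAct θ (y i) + η)‖ := by
      intro i
      rw [← norm_matAct hθorth (x' i - y i), matAct_sub, hfix i]
      congr 1
      abel
    have hyM : (fun i => matAct θ (y i) + η) ∈ orbitM z := by
      refine ⟨θ * ψ, matAct θ μ + η, isSO_mul hθ hψ, fun i => ?_⟩
      show matAct θ (y i) + η = matAct (θ * ψ) (z i) + (matAct θ μ + η)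
      rw [hyy i, matAct_add, ← matAct_mul]
      abel
    calc ∑ i, ‖x' i - z i‖ ^ 2 = s₀ := hs'
      _ ≤ ∑ i, ‖x i - (matAct θ (y i) + η)‖ ^ 2 := hy₀min _ hyM
      _ = ∑ i, ‖x' i - y i‖ ^ 2 := by
          apply Finset.sum_congr rfl
          intro i _
          rw [hxai i]
  have hperp : InHzPerp z (fun i => x' i - z i) := by
    rintro gg ⟨X, hX, v, hgg⟩
    have hp := perp_of_min z x' hmin' hX v
    rw [← hp]
    apply Finset.sum_congr rfl
    intro i _
    rw [hgg i]
  -- all neighbor distances of x' are a, giving the quadratic relation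
  have hinner : ∀ i j, i < j → ‖z i - z j‖ = a →
      (inner ℝ ((x' i - z i) - (x' j - z j)) (z i - z j) : ℝ)
        = -(‖(x' i - z i) - (x' j - z j)‖ ^ 2) / 2 := by
    intro i j hij hnb
    have hx'd : ‖x' i - x' j‖ = a := by
      have e : x' i - x' j = matAct θᵀ (x i - x j) := by
        rw [hx'def]
        simp only
        rw [← matAct_sub]
        congr 1
        abel
      rw [e, norm_matAct hθTorth]
      exact hxdist i j hij hnb
    have hdecomp : x' i - x' j = (z i - z j) + ((x' i - z i) - (x' j - z j)) := by abel
    have hnormeq : ‖(z i - z j) + ((x' i - z i) - (x' j - z j))‖ ^ 2 = ‖z i - z j‖ ^ 2 := by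
      rw [← hdecomp, hx'd, hnb]
    rw [norm_add_sq_real] at hnormeq
    have := real_inner_comm ((x' i - z i) - (x' j - z j)) (z i - z j)
    linarith
  clear_value x' s₀
  have hQle : Qz a z (fun i => x' i - z i) ≤ (N:ℝ)^2 * (4 * s₀ ^ 2) := by
    have hterm : ∀ i j : Fin N,
        (if i < j ∧ ‖z i - z j‖ = a then
          (inner ℝ ((x' i - z i) - (x' j - z j)) (z i - z j) : ℝ) ^ 2 else 0) ≤ 4 * s₀ ^ 2 := by
      intro i j
      split
      · next hcond =>
          rw [hinner i j hcond.1 hcond.2]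
          have e1 : ‖x' i - z i‖ ^ 2 ≤ s₀ := by
            rw [← hs']
            exact Finset.single_le_sum (f := fun k => ‖x' k - z k‖ ^ 2)
              (fun k _ => by positivity) (Finset.mem_univ i)
          have e2 : ‖x' j - z j‖ ^ 2 ≤ s₀ := by
            rw [← hs']
            exact Finset.single_le_sum (f := fun k => ‖x' k - z k‖ ^ 2)
              (fun k _ => by positivity) (Finset.mem_univ j)
          have e3 : ‖(x' i - z i) - (x' j - z j)‖ ≤ ‖x' i - z i‖ + ‖x' j - z j‖ :=
            norm_sub_le _ _
          have e4 : ‖(x' i - z i) - (x' j - z j)‖ ^ 2 ≤ 4 * s₀ := by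
            nlinarith [norm_nonneg (x' i - z i), norm_nonneg (x' j - z j),
              norm_nonneg ((x' i - z i) - (x' j - z j)),
              sq_nonneg (‖x' i - z i‖ - ‖x' j - z j‖)]
          nlinarith [e4, sq_nonneg (‖(x' i - z i) - (x' j - z j)‖ ^ 2),
            norm_nonneg ((x' i - z i) - (x' j - z j)), hs₀nonneg]
      · positivity
    calc Qz a z (fun i => x' i - z i)
        = ∑ i : Fin N, ∑ j : Fin N, (if i < j ∧ ‖z i - z j‖ = a then
            (inner ℝ ((x' i - z i) - (x' j - z j)) (z i - z j) : ℝ) ^ 2 else 0) := rfl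
      _ ≤ ∑ _i : Fin N, ∑ _j : Fin N, 4 * s₀ ^ 2 := by
          apply Finset.sum_le_sum
          intro i _
          apply Finset.sum_le_sum
          intro j _
          exact hterm i j
      _ = (N:ℝ)^2 * (4 * s₀ ^ 2) := by
          simp [Finset.sum_const, Finset.card_univ]
          ring
  have hQge := hQbound _ hperp
  rw [hs'] at hQge
  have hkey : lam ≤ 4 * (N:ℝ)^2 * s₀ := by
    have h1 := le_trans hQge hQle
    nlinarith [hs₀pos]
  have hδ2 : δ ^ 2 ≤ (lam / ((N:ℝ)^2+1)) / 16 := by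
    have h2 : (Real.sqrt (lam/((N:ℝ)^2+1)) / 4) ^ 2 = (lam/((N:ℝ)^2+1)) / 16 := by
      rw [div_pow, Real.sq_sqrt hq.le]
      norm_num
    calc δ ^ 2 ≤ (Real.sqrt (lam/((N:ℝ)^2+1)) / 4) ^ 2 :=
          pow_le_pow_left₀ hδpos.le hδq 2
      _ = (lam/((N:ℝ)^2+1)) / 16 := h2
  have hfin : 4 * (N:ℝ)^2 * s₀ < lam := by
    have hN2 : (0:ℝ) ≤ (N:ℝ)^2 := by positivity
    have h3 : 4 * (N:ℝ)^2 * s₀ ≤ 4 * ((N:ℝ)^2 * ((lam/((N:ℝ)^2+1)) / 16)) := by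
      have := mul_le_mul_of_nonneg_left (le_trans hs₀le hδ2) hN2
      nlinarith [this]
    have hqq : (lam/((N:ℝ)^2+1)) * ((N:ℝ)^2+1) = lam :=
      div_mul_cancel₀ lam (by positivity)
    have hqqpos : 0 < lam/((N:ℝ)^2+1) := hq
    have hN2qq : 0 ≤ (N:ℝ)^2 * (lam/((N:ℝ)^2+1)) := mul_nonneg hN2 hqqpos.le
    nlinarith
  exact lt_irrefl lam (lt_of_le_of_lt hkey hfin)
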